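/- For every integer k ≥ 3, the graph obtained from the complete bipartite graph K_{k+1,k+1} by deleting a perfect matching is a connected k-regular Hamiltonian graph that belongs to 𝒢(k) and is not claw-free. -/

import Mathlib

open SimpleGraph



open SimpleGraph

/-- The graph `G` belongs to the class 𝒢(k): it is connected, `k`-regular, and every vertex has
at most `k` vertices at distance exactly `2`. (Finiteness is imposed via `Fintype` on vertices.) -/
def InGClass {V : Type*} (G : SimpleGraph V) (k : ℕ) : Prop :=
  G.Connected ∧ (∀ v : V, (G.neighborSet v).ncard = k) ∧
    ∀ u : V, {v : V | G.dist u v = 2}.ncard ≤ k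

/-- A graph is `t`-connected if it has more than `t` vertices and stays connected after
deleting any set of fewer than `t` vertices. -/
def IsTConnectedGraph {V : Type*} (G : SimpleGraph V) (t : ℕ) : Prop :=
  t < Nat.card V ∧ ∀ s : Set V, s.ncard < t → (G.induce sᶜ).Connected

/-- A graph is locally connected if every neighborhood induces a connected subgraph. -/
def GraphLocallyConnected {V : Type*} (G : SimpleGraph V) : Prop :=
  ∀ v : V, (G.induce (G.neighborSet v)).Connected

/-- A graph is claw-free if it has no induced subgraph isomorphic to `K_{1,3}`. -/
def GraphClawFree {V : Type*} (G : SimpleGraph V) : Prop :=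
  IsEmpty (completeBipartiteGraph (Fin 1) (Fin 3) ↪g G)

section Helper

open Fin.NatCast

variable {V : Type*} [Fintype V] [DecidableEq V] {G : SimpleGraph V}

/-- Descending walk along a cyclic enumeration. -/
def descWalk (G : SimpleGraph V) {m : ℕ} [NeZero m] (f : Fin m → V)
    (hadj : ∀ i : Fin m, G.Adj (f i) (f (i + 1))) : (j : ℕ) → G.Walk (f (j : Fin m)) (f (0 : ℕ))
  | 0 => Walk.nil
  | (j + 1) => Walk.cons (by
      have := (hadj (j : Fin m)).symm
      rwa [show ((j : Fin m) + 1) = ((j + 1 : ℕ) : Fin m) by push_cast; ring] at this)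
      (descWalk G f hadj j)

omit [Fintype V] [DecidableEq V] in
lemma descWalk_support (G : SimpleGraph V) {m : ℕ} [NeZero m] (f : Fin m → V)
    (hadj : ∀ i : Fin m, G.Adj (f i) (f (i + 1))) (j : ℕ) :
    (descWalk G f hadj j).support
      = List.map (fun t : ℕ => f (t : Fin m)) (List.range (j + 1)).reverse := by
  induction j with
  | zero => simp [descWalk, List.range_succ]
  | succ j ih =>
    rw [descWalk, Walk.support_cons, ih]
    conv_rhs => rw [List.range_succ]
    simp [Nat.cast_add, Nat.cast_one]

omit [Fintype V] [DecidableEq V] in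
lemma descWalk_edges (G : SimpleGraph V) {m : ℕ} [NeZero m] (f : Fin m → V)
    (hadj : ∀ i : Fin m, G.Adj (f i) (f (i + 1))) (j : ℕ) {e : Sym2 V}
    (he : e ∈ (descWalk G f hadj j).edges) :
    ∃ t < j, e = s(f ((t + 1 : ℕ) : Fin m), f (t : Fin m)) := by
  induction j with
  | zero => simp [descWalk] at he
  | succ j ih =>
    rw [descWalk, Walk.edges_cons] at he
    rcases List.mem_cons.1 he with h | h
    · exact ⟨j, Nat.lt_succ_self j, h⟩
    · obtain ⟨t, ht, rfl⟩ := ih h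
      exact ⟨t, ht.trans (Nat.lt_succ_self j), rfl⟩

lemma hamiltonian_of_cyclic {m : ℕ} [NeZero m] (hm : 3 ≤ m) (hcard : Fintype.card V = m)
    (f : Fin m → V) (hf : Function.Bijective f)
    (hadj : ∀ i : Fin m, G.Adj (f i) (f (i + 1))) : G.IsHamiltonian := by
  intro _
  have hinj : ∀ a b : ℕ, a < m → b < m → f (a : Fin m) = f (b : Fin m) → a = b := by
    intro a b ha hb h
    have h2 : (a : Fin m) = (b : Fin m) := hf.injective h
    have h3 := congrArg Fin.val h2
    simpa [Fin.val_natCast, Nat.mod_eq_of_lt ha, Nat.mod_eq_of_lt hb] using h3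
  have hmm : m - 1 + 1 = m := Nat.sub_add_cancel (by omega)
  have h0 : G.Adj (f ((0 : ℕ) : Fin m)) (f ((m - 1 : ℕ) : Fin m)) := by
    have h1 := (hadj ((m - 1 : ℕ) : Fin m)).symm
    have hcast : ((m - 1 : ℕ) : Fin m) + 1 = ((0 : ℕ) : Fin m) := by
      rw [show ((m - 1 : ℕ) : Fin m) + 1 = ((m - 1 + 1 : ℕ) : Fin m) by push_cast; ring, hmm]
      simp
    rwa [hcast] at h1
  refine ⟨f ((0 : ℕ) : Fin m), Walk.cons h0 (descWalk G f hadj (m - 1)), ?_⟩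
  rw [Walk.isHamiltonianCycle_iff_isCycle_and_support_count_tail_eq_one]
  have hsupp := descWalk_support G f hadj (m - 1)
  have hnodup : (List.map (fun t : ℕ => f (t : Fin m)) (List.range (m - 1 + 1)).reverse).Nodup := by
    refine (List.nodup_reverse.2 List.nodup_range).map_on ?_
    intro a ha b hb h
    rw [List.mem_reverse, List.mem_range, hmm] at ha hb
    exact hinj a b ha hb h
  constructor
  · rw [Walk.cons_isCycle_iff]
    refine ⟨Walk.IsPath.mk' (by rw [hsupp]; exact hnodup), ?_⟩
    intro he
    obtain ⟨t, ht, hte⟩ := descWalk_edges G f hadj (m - 1) he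
    rcases Sym2.eq_iff.1 hte with ⟨h1, h2⟩ | ⟨h1, h2⟩
    · have := hinj 0 (t + 1) (by omega) (by omega) h1
      omega
    · have e1 := hinj 0 t (by omega) (by omega) h1
      have e2 := hinj (m - 1) (t + 1) (by omega) (by omega) h2
      omega
  · intro a
    rw [Walk.support_cons, List.tail_cons, hsupp]
    obtain ⟨i, rfl⟩ := hf.surjective a
    have hfi : ((i.val : ℕ) : Fin m) = i := Fin.cast_val_eq_self i
    refine List.count_eq_one_of_mem hnodup ?_
    rw [← hfi]
    exact List.mem_map_of_mem (by rw [List.mem_reverse, List.mem_range, hmm]; exact i.isLt)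

end Helper

/-- For `k ≥ 3`, deleting a perfect matching from the complete bipartite graph
`K_{k+1,k+1}` yields a connected `k`-regular Hamiltonian graph belonging to 𝒢(k) that is not
claw-free. -/
theorem stmt_19 (k : ℕ) (hk : 3 ≤ k)
    (M : SimpleGraph.Subgraph (completeBipartiteGraph (Fin (k + 1)) (Fin (k + 1))))
    (hM : M.IsPerfectMatching) :
    ((completeBipartiteGraph (Fin (k + 1)) (Fin (k + 1))).deleteEdges M.edgeSet).Connected ∧
    (∀ v, (((completeBipartiteGraph (Fin (k + 1)) (Fin (k + 1))).deleteEdges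
        M.edgeSet).neighborSet v).ncard = k) ∧
    ((completeBipartiteGraph (Fin (k + 1)) (Fin (k + 1))).deleteEdges M.edgeSet).IsHamiltonian ∧
    InGClass ((completeBipartiteGraph (Fin (k + 1)) (Fin (k + 1))).deleteEdges M.edgeSet) k ∧
    ¬ GraphClawFree ((completeBipartiteGraph (Fin (k + 1)) (Fin (k + 1))).deleteEdges
        M.edgeSet) := by
  classical
  have hn : True := trivial
  let n := k + 1
  set G := (completeBipartiteGraph (Fin (k+1)) (Fin (k+1))).deleteEdges M.edgeSet with hG
  -- unique partner
  have huniq : ∀ (u w w' : Fin (k+1) ⊕ Fin (k+1)), M.Adj u w → M.Adj u w' → w = w' := by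
    intro u w w' h h'
    obtain ⟨x, _, hu⟩ := hM.1 (hM.2 u)
    exact (hu w h).trans (hu w' h').symm
  -- the matching bijection
  have hσex : ∀ i : Fin (k+1), ∃ b : Fin (k+1), M.Adj (Sum.inl i) (Sum.inr b) := by
    intro i
    obtain ⟨w, hw, -⟩ := hM.1 (hM.2 (Sum.inl i))
    have hKadj : (completeBipartiteGraph (Fin (k+1)) (Fin (k+1))).Adj (Sum.inl i) w := M.adj_sub hw
    cases w with
    | inl j => simp [completeBipartiteGraph] at hKadj
    | inr b => exact ⟨b, hw⟩
  choose σ hσ using hσex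
  have hσu : ∀ i b, M.Adj (Sum.inl i) (Sum.inr b) → b = σ i := by
    intro i b h
    have := huniq _ _ _ h (hσ i)
    exact Sum.inr.inj this
  have hσinj : Function.Injective σ := by
    intro i j h
    have h1 : M.Adj (Sum.inr (σ i)) (Sum.inl i) := (hσ i).symm
    have h2 : M.Adj (Sum.inr (σ i)) (Sum.inl j) := by rw [h]; exact (hσ j).symm
    exact Sum.inl.inj (huniq _ _ _ h1 h2)
  have hσbij : Function.Bijective σ := (Finite.injective_iff_bijective).1 hσinj
  -- adjacency characterization
  have hGlr : ∀ a b : Fin (k+1), G.Adj (Sum.inl a) (Sum.inr b) ↔ b ≠ σ a := by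
    intro a b
    rw [hG, SimpleGraph.deleteEdges_adj, Subgraph.mem_edgeSet]
    constructor
    · rintro ⟨-, hnm⟩ rfl
      exact hnm (hσ a)
    · intro hb
      refine ⟨by simp [completeBipartiteGraph], fun hm => hb (hσu a b hm)⟩
  have hGll : ∀ a b : Fin (k+1), ¬ G.Adj (Sum.inl a) (Sum.inl b) := by
    intro a b h
    rw [hG, SimpleGraph.deleteEdges_adj] at h
    simpa [completeBipartiteGraph] using h.1
  have hGrr : ∀ a b : Fin (k+1), ¬ G.Adj (Sum.inr a) (Sum.inr b) := by
    intro a b h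
    rw [hG, SimpleGraph.deleteEdges_adj] at h
    simpa [completeBipartiteGraph] using h.1
  have hGrl : ∀ a b : Fin (k+1), G.Adj (Sum.inr b) (Sum.inl a) ↔ b ≠ σ a := by
    intro a b
    rw [adj_comm]
    exact hGlr a b
  -- ncard of complement of a singleton
  have hcompl : ∀ x : Fin (k+1), ({x}ᶜ : Set (Fin (k+1))).ncard = k := by
    intro x
    rw [Set.ncard_eq_toFinset_card']
    simp [Finset.card_compl]
  -- regularity
  have hreg : ∀ v, (G.neighborSet v).ncard = k := by
    intro v
    cases v with
    | inl a =>
      have : G.neighborSet (Sum.inl a) = Sum.inr '' ({σ a}ᶜ : Set (Fin (k+1))) := by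
        ext w
        cases w with
        | inl b => simp [mem_neighborSet, hGll a b]
        | inr b => simp [mem_neighborSet, hGlr a b]
      rw [this, Set.ncard_image_of_injective _ Sum.inr_injective, hcompl]
    | inr b =>
      obtain ⟨a₀, ha₀⟩ := hσbij.surjective b
      have : G.neighborSet (Sum.inr b) = Sum.inl '' ({a₀}ᶜ : Set (Fin (k+1))) := by
        ext w
        cases w with
        | inl a =>
          simp only [mem_neighborSet, Set.mem_image, Set.mem_compl_iff, Set.mem_singleton_iff]
          rw [adj_comm, hGlr a b]
          constructor
          · intro h
            exact ⟨a, fun hc => h (by rw [← ha₀, hc]), rfl⟩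
          · rintro ⟨x, hx, hxa⟩ hc
            obtain rfl := Sum.inl_injective hxa
            exact hx (hσinj (by rw [ha₀, hc]))
        | inr c =>
          simp [mem_neighborSet, hGrr b c]
      rw [this, Set.ncard_image_of_injective _ Sum.inl_injective, hcompl]
  -- Hamiltonicity
  have hmodfact : ∀ t : ℕ, t < 2*(k+1) → (t % (k+1) < k+1 ∧ (t % (k+1) = t ∨ t % (k+1) + (k+1) = t)) := by
    intro t ht
    refine ⟨Nat.mod_lt _ (by omega), ?_⟩
    rcases Nat.lt_or_ge t (k+1) with h | h
    · left; exact Nat.mod_eq_of_lt h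
    · right
      have h2 : t % (k+1) = t - (k+1) := by
        rw [Nat.mod_eq_sub_mod h, Nat.mod_eq_of_lt (by omega)]
      omega
  haveI : NeZero (2 * (k+1)) := ⟨by omega⟩
  set f : Fin (2 * (k+1)) → Fin (k+1) ⊕ Fin (k+1) := fun i =>
    if i.val % 2 = 0 then Sum.inl ⟨i.val / 2, by have := i.isLt; omega⟩
    else Sum.inr (σ ⟨(i.val / 2 + 2) % (k+1), Nat.mod_lt _ (by omega)⟩) with hf
  have hfinj : Function.Injective f := by
    intro a b hab
    have ha := a.isLt
    have hb := b.isLt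
    rcases Nat.even_or_odd a.val with hae | hao <;> rcases Nat.even_or_odd b.val with hbe | hbo
    · rw [hf] at hab
      simp only [Nat.even_iff.1 hae, Nat.even_iff.1 hbe, if_pos rfl] at hab
      have := Fin.mk.injEq _ _ _ _ ▸ Sum.inl.inj hab
      have hd : a.val / 2 = b.val / 2 := by simpa using this
      have hpar : a.val % 2 = b.val % 2 := by rw [Nat.even_iff.1 hae, Nat.even_iff.1 hbe]
      exact Fin.ext (by omega)
    · rw [hf] at hab
      simp only [Nat.even_iff.1 hae, Nat.odd_iff.1 hbo, if_pos rfl] at hab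
      simp at hab
    · rw [hf] at hab
      simp only [Nat.odd_iff.1 hao, Nat.even_iff.1 hbe] at hab
      simp at hab
    · rw [hf] at hab
      simp only [Nat.odd_iff.1 hao, Nat.odd_iff.1 hbo] at hab
      norm_num at hab
      have := hσinj hab
      have hd : (a.val / 2 + 2) % (k+1) = (b.val / 2 + 2) % (k+1) := by
        simpa using congrArg Fin.val this
      have hpar : a.val % 2 = b.val % 2 := by rw [Nat.odd_iff.1 hao, Nat.odd_iff.1 hbo]
      have hm1 := hmodfact (a.val / 2 + 2) (by omega)
      have hm2 := hmodfact (b.val / 2 + 2) (by omega)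
      exact Fin.ext (by omega)
  have hfbij : Function.Bijective f := by
    rw [Fintype.bijective_iff_injective_and_card]
    exact ⟨hfinj, by simp; omega⟩
  have hadjf : ∀ i : Fin (2 * (k+1)), G.Adj (f i) (f (i + 1)) := by
    intro i
    have hi := i.isLt
    have hval : ((i + 1 : Fin (2 * (k+1))) : ℕ) = (i.val + 1) % (2 * (k+1)) := by
      rw [Fin.val_add, Fin.val_one', Nat.mod_eq_of_lt (show 1 < 2*(k+1) by omega)]
    rcases Nat.even_or_odd i.val with he | ho
    · -- even: i.val + 1 < 2n
      have he2 := Nat.even_iff.1 he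
      have hlt : i.val + 1 < 2 * (k+1) := by omega
      have hval1 : ((i + 1 : Fin (2 * (k+1))) : ℕ) = i.val + 1 := by rw [hval, Nat.mod_eq_of_lt hlt]
      rw [hf]
      simp only [he2, if_pos rfl, hval1]
      have : (i.val + 1) % 2 = 1 := by omega
      simp only [this]
      norm_num
      rw [hGlr]
      intro hc
      have := congrArg Fin.val (hσinj hc)
      simp at this
      have hm1 := hmodfact ((i.val + 1) / 2 + 2) (by omega)
      omega
    · have ho2 := Nat.odd_iff.1 ho
      rcases eq_or_ne i.val (2 * (k+1) - 1) with hend | hmid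
      · -- wrap around
        have hval0 : ((i + 1 : Fin (2 * (k+1))) : ℕ) = 0 := by
          rw [hval, hend, Nat.sub_add_cancel (by omega), Nat.mod_self]
        rw [hf]
        simp only [ho2, hval0]
        norm_num
        rw [hGrl]
        intro hc
        have := congrArg Fin.val (hσinj hc)
        simp at this
        have hm1 := hmodfact (i.val / 2 + 2) (by omega)
        omega
      · have hlt : i.val + 1 < 2 * (k+1) := by omega
        have hval1 : ((i + 1 : Fin (2 * (k+1))) : ℕ) = i.val + 1 := by rw [hval, Nat.mod_eq_of_lt hlt]
        rw [hf]
        simp only [ho2, hval1]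
        have : (i.val + 1) % 2 = 0 := by omega
        simp only [this]
        norm_num
        rw [hGrl]
        intro hc
        have := congrArg Fin.val (hσinj hc)
        simp at this
        have hm1 := hmodfact (i.val / 2 + 2) (by omega)
        omega
  have hham : G.IsHamiltonian :=
    hamiltonian_of_cyclic (m := 2 * (k+1)) (by omega) (by simp; omega) f hfbij hadjf
  have hconn : G.Connected := hham.connected
  -- distance-2 bound
  have key : ∀ u v, G.dist u v = 2 → ∃ w, G.Adj u w ∧ G.Adj w v ∧ v ≠ u := by
    intro u v hd
    have hne : v ≠ u := by rintro rfl; simp [SimpleGraph.dist_self] at hd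
    obtain ⟨p, hp⟩ := SimpleGraph.exists_walk_of_dist_ne_zero (u := u) (v := v) (by rw [hd]; omega)
    rw [hd] at hp
    cases p with
    | nil => simp at hp
    | cons h q =>
      cases q with
      | nil => simp at hp
      | cons h' q' =>
        have hq0 : q'.length = 0 := by simp only [Walk.length_cons] at hp; omega
        have hv := Walk.eq_of_length_eq_zero hq0
        exact ⟨_, h, hv ▸ h', hne⟩
  have hdist : ∀ u, {v | G.dist u v = 2}.ncard ≤ k := by
    intro u
    cases u with
    | inl a =>
      have hsub : {v | G.dist (Sum.inl a) v = 2} ⊆ Sum.inl '' ({a}ᶜ : Set (Fin (k+1))) := by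
        intro v hv
        obtain ⟨w, h1, h2, hne⟩ := key _ v hv
        cases w with
        | inl c => exact absurd h1 (hGll a c)
        | inr c =>
          cases v with
          | inr d => exact absurd h2 (hGrr c d)
          | inl d =>
            exact ⟨d, fun hda => hne (by simp only [Set.mem_singleton_iff] at hda; rw [hda]), rfl⟩
      calc {v | G.dist (Sum.inl a) v = 2}.ncard
          ≤ (Sum.inl '' ({a}ᶜ : Set (Fin (k+1)))).ncard :=
            Set.ncard_le_ncard hsub (Set.toFinite _)
        _ = k := by rw [Set.ncard_image_of_injective _ Sum.inl_injective, hcompl]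
    | inr b =>
      have hsub : {v | G.dist (Sum.inr b) v = 2} ⊆ Sum.inr '' ({b}ᶜ : Set (Fin (k+1))) := by
        intro v hv
        obtain ⟨w, h1, h2, hne⟩ := key _ v hv
        cases w with
        | inr c => exact absurd h1 (hGrr b c)
        | inl c =>
          cases v with
          | inl d => exact absurd h2 (hGll c d)
          | inr d =>
            exact ⟨d, fun hdb => hne (by simp only [Set.mem_singleton_iff] at hdb; rw [hdb]), rfl⟩
      calc {v | G.dist (Sum.inr b) v = 2}.ncard
          ≤ (Sum.inr '' ({b}ᶜ : Set (Fin (k+1)))).ncard :=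
            Set.ncard_le_ncard hsub (Set.toFinite _)
        _ = k := by rw [Set.ncard_image_of_injective _ Sum.inr_injective, hcompl]
  -- not claw-free
  have hclaw : ¬ GraphClawFree G := by
    have hcard : Fintype.card (Fin 3) ≤ Fintype.card {b : Fin (k+1) // ¬ b = σ 0} := by
      rw [Fintype.card_subtype_compl, Fintype.card_subtype_eq]
      simp
      omega
    obtain ⟨e⟩ := Function.Embedding.nonempty_of_card_le hcard
    have emb : completeBipartiteGraph (Fin 1) (Fin 3) ↪g G := by
      refine ⟨⟨Sum.elim (fun _ => Sum.inl 0) (fun t => Sum.inr (e t).val), ?_⟩, ?_⟩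
      · rintro (x | x) (y | y) hxy
        · exact congrArg Sum.inl (Subsingleton.elim x y)
        · simp at hxy
        · simp at hxy
        · simp only [Sum.elim_inr, Sum.inr.injEq] at hxy
          exact congrArg Sum.inr (e.injective (Subtype.ext hxy))
      · rintro (x | x) (y | y)
        · exact iff_of_false (hGll 0 0) (by simp [completeBipartiteGraph])
        · exact iff_of_true ((hGlr _ _).2 (e y).2) (by simp [completeBipartiteGraph])
        · exact iff_of_true ((hGrl _ _).2 (e x).2) (by simp [completeBipartiteGraph])
        · exact iff_of_false (hGrr _ _) (by simp [completeBipartiteGraph])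
    unfold GraphClawFree
    rw [not_isEmpty_iff]
    exact ⟨emb⟩
  exact ⟨hconn, hreg, hham, ⟨hconn, hreg, hdist⟩, hclaw⟩
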